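/- Let n ≥ 7 and α, β ∈ S_n nonidentity. If at least one of α, β has a cycle of length at least three, and at least one of α, β is fixed point free, then there exists σ ∈ S_n such that σ⁻¹ασ·β has exactly one fixed point. -/

import Mathlib

private lemma Equiv.Perm.inv_apply_self {α : Type*} (f : Equiv.Perm α) (x : α) :
    f⁻¹ (f x) = x := by
  simp only [Equiv.Perm.coe_inv, Equiv.symm_apply_apply]

private lemma Equiv.Perm.apply_inv_self {α : Type*} (f : Equiv.Perm α) (x : α) :
    f (f⁻¹ x) = x := by
  simp only [Equiv.Perm.coe_inv, Equiv.apply_symm_apply]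

private lemma perm_exists_moved {n : ℕ} (π : Equiv.Perm (Fin n)) (h : π ≠ 1) :
    ∃ i, π i ≠ i := by
  by_contra hcon
  push_neg at hcon
  exact h (Equiv.ext fun i => by simp [hcon i])

private lemma extract_three {n : ℕ} (π : Equiv.Perm (Fin n))
    (h : ∃ k ∈ π.cycleType, 3 ≤ k) :
    ∃ x, π x ≠ x ∧ π (π x) ≠ x := by
  classical
  obtain ⟨k, hk, hk3⟩ := h
  rw [Equiv.Perm.cycleType_def, Multiset.mem_map] at hk
  obtain ⟨c, hc, hck⟩ := hk
  rw [Finset.mem_val] at hc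
  obtain ⟨hcyc, hagree⟩ := (Equiv.Perm.mem_cycleFactorsFinset_iff).mp hc
  have hcard : 3 ≤ c.support.card := by
    simp only [Function.comp_apply] at hck
    omega
  have hne : c.support.Nonempty := Finset.card_pos.mp (by omega)
  obtain ⟨a, ha⟩ := hne
  have ha' : c a ≠ a := Equiv.Perm.mem_support.mp ha
  have hca : c a ∈ c.support := Equiv.Perm.apply_mem_support.mpr ha
  refine ⟨a, ?_, ?_⟩
  · rw [← hagree a ha]; exact ha'
  · rw [← hagree a ha, ← hagree (c a) hca]
    intro hcc
    -- show support ⊆ {a, c a}, contradicting card ≥ 3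
    have hpow : ∀ i : ℕ, (c ^ i) a = a ∨ (c ^ i) a = c a := by
      intro i
      induction i with
      | zero => left; simp
      | succ m ih =>
        have hstep : (c ^ (m + 1)) a = c ((c ^ m) a) := by
          rw [pow_succ']; rfl
        rcases ih with h | h
        · right; rw [hstep, h]
        · left; rw [hstep, h, hcc]
    have hsub : c.support ⊆ {a, c a} := by
      intro b hb
      obtain ⟨i, hi⟩ := hcyc.exists_pow_eq ha' (Equiv.Perm.mem_support.mp hb)
      rcases hpow i with h | h
      · simp [← hi, h]
      · simp [← hi, h]
    have hle := Finset.card_le_card hsub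
    have h2 : ({a, c a} : Finset (Fin n)).card ≤ 2 := by
      refine le_trans (Finset.card_insert_le _ _) ?_
      simp
    omega

private lemma core {n : ℕ} (hn : 7 ≤ n) (α δ : Equiv.Perm (Fin n))
    (hloop : (∀ i, δ i ≠ i) ∨ (∀ v, α v ≠ v))
    (x : Fin n) (hx1 : α x ≠ x) (hx2 : α (α x) ≠ x)
    (j₁ : Fin n) (hj₁ : δ j₁ ≠ j₁) :
    ∃ σ : Equiv.Perm (Fin n), ∀ j, (σ (δ j) = α (σ j) ↔ j = j₁) := by
  classical
  set F : Equiv.Perm (Fin n) → Finset (Fin n) :=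
    fun σ => Finset.univ.filter (fun j => σ (δ j) = α (σ j) ∧ j ≠ j₁) with hF
  set S : Finset (Equiv.Perm (Fin n)) :=
    Finset.univ.filter (fun σ => σ j₁ = x ∧ σ (δ j₁) = α x) with hS
  have hmemS : ∀ σ : Equiv.Perm (Fin n), σ ∈ S ↔ (σ j₁ = x ∧ σ (δ j₁) = α x) := by
    intro σ; rw [hS]; simp
  have hmemF : ∀ (σ : Equiv.Perm (Fin n)) (j : Fin n),
      j ∈ F σ ↔ (σ (δ j) = α (σ j) ∧ j ≠ j₁) := by
    intro σ j; rw [hF]; simp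
  have hSne : S.Nonempty := by
    refine ⟨Equiv.swap (Equiv.swap j₁ x (δ j₁)) (α x) * Equiv.swap j₁ x, ?_⟩
    rw [hmemS]
    have h1 : Equiv.swap j₁ x j₁ = x := Equiv.swap_apply_left _ _
    have hne1 : Equiv.swap j₁ x (δ j₁) ≠ x := by
      intro h
      exact hj₁ ((Equiv.injective _) (h.trans h1.symm))
    constructor
    · rw [Equiv.Perm.mul_apply, h1,
        Equiv.swap_apply_of_ne_of_ne (Ne.symm hne1) (Ne.symm hx1)]
    · rw [Equiv.Perm.mul_apply, Equiv.swap_apply_left]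
  obtain ⟨σ, hσS, hσmin⟩ := Finset.exists_min_image S (fun σ => (F σ).card) hSne
  obtain ⟨hσ1, hσ2⟩ := (hmemS σ).mp hσS
  by_cases hF0 : F σ = ∅
  · refine ⟨σ, fun j => ⟨fun hconf => ?_, fun hj => ?_⟩⟩
    · by_contra hne
      have : j ∈ F σ := (hmemF σ j).mpr ⟨hconf, hne⟩
      rw [hF0] at this
      exact absurd this (Finset.notMem_empty j)
    · subst hj; rw [hσ1, hσ2]
  · exfalso
    obtain ⟨j₀, hj₀mem⟩ := Finset.nonempty_iff_ne_empty.mpr hF0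
    have hj₀ : σ (δ j₀) = α (σ j₀) := ((hmemF σ j₀).mp hj₀mem).1
    have hj₀ne : j₀ ≠ j₁ := ((hmemF σ j₀).mp hj₀mem).2
    have hδj₀ : δ j₀ ≠ j₀ := by
      intro h
      rcases hloop with hl | hl
      · exact hl j₀ h
      · rw [h] at hj₀
        exact hl (σ j₀) hj₀.symm
    have finish : ∀ σ' : Equiv.Perm (Fin n), σ' ∈ S → F σ' ⊆ (F σ).erase j₀ → False := by
      intro σ' hS' hsub
      have h1 : (F σ').card < (F σ).card :=
        lt_of_le_of_lt (Finset.card_le_card hsub) (Finset.card_erase_lt_of_mem hj₀mem)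
      exact absurd (hσmin σ' hS') (not_le.mpr h1)
    by_cases hcase : δ j₀ = j₁
    · -- STYLE 2 : swap at positions j₀ and q
      have hj₀δj₁ : j₀ ≠ δ j₁ := by
        intro h
        apply hx2
        have e1 : σ (δ j₀) = α (σ j₀) := hj₀
        rw [hcase, hσ1, h, hσ2] at e1
        exact e1.symm
      have hex : ∃ q : Fin n,
          q ∉ [j₀, j₁, δ j₁, σ⁻¹ (α (σ (δ⁻¹ j₀))), δ (σ⁻¹ (α⁻¹ (σ j₀)))].toFinset := by
        by_contra hc
        push_neg at hc
        have h7 : (Finset.univ : Finset (Fin n)).card ≤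
            ([j₀, j₁, δ j₁, σ⁻¹ (α (σ (δ⁻¹ j₀))), δ (σ⁻¹ (α⁻¹ (σ j₀)))].toFinset).card :=
          Finset.card_le_card (fun z _ => hc z)
        have h8 := List.toFinset_card_le
          [j₀, j₁, δ j₁, σ⁻¹ (α (σ (δ⁻¹ j₀))), δ (σ⁻¹ (α⁻¹ (σ j₀)))]
        simp only [Finset.card_univ, Fintype.card_fin, List.length_cons,
          List.length_nil] at h7 h8
        omega
      obtain ⟨q, hq⟩ := hex
      simp only [List.mem_toFinset, List.mem_cons, List.not_mem_nil, or_false] at hq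
      push_neg at hq
      obtain ⟨hqj₀, hqj₁, hqδj₁, hqC, hqD⟩ := hq
      set σ' := σ * Equiv.swap j₀ q with hσ'def
      have happ : ∀ z, σ' z = σ (Equiv.swap j₀ q z) := fun z => rfl
      have hσ'S : σ' ∈ S := by
        rw [hmemS]
        constructor
        · rw [happ, Equiv.swap_apply_of_ne_of_ne (Ne.symm hj₀ne) (Ne.symm hqj₁)]
          exact hσ1
        · rw [happ, Equiv.swap_apply_of_ne_of_ne (Ne.symm hj₀δj₁) (Ne.symm hqδj₁)]
          exact hσ2
      refine finish σ' hσ'S ?_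
      intro t htmem
      obtain ⟨hteq, htne⟩ := (hmemF σ' t).mp htmem
      rw [Finset.mem_erase, hmemF]
      simp only [happ] at hteq
      by_cases h1 : t = j₀
      · exfalso
        rw [h1] at hteq
        rw [Equiv.swap_apply_left, hcase,
          Equiv.swap_apply_of_ne_of_ne (Ne.symm hj₀ne) (Ne.symm hqj₁)] at hteq
        -- hteq : σ j₁ = α (σ q)
        have e1 : σ j₁ = α (σ j₀) := by
          rw [← hcase]; exact hj₀
        have e2 : σ q = σ j₀ := α.injective (hteq.symm.trans e1)
        exact hqj₀ (σ.injective e2)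
      · by_cases h2 : t = q
        · exfalso
          rw [h2] at hteq
          rw [Equiv.swap_apply_right] at hteq
          -- hteq : σ (swap j₀ q (δ q)) = α (σ j₀)
          by_cases h2a : δ q = j₀
          · rw [h2a, Equiv.swap_apply_left] at hteq
            -- σ q = α (σ j₀) = σ (δ j₀) = σ j₁
            have e1 : σ q = σ j₁ := by
              rw [hteq, ← hj₀, hcase]
            exact hqj₁ (σ.injective e1)
          · by_cases h2b : δ q = q
            · rw [h2b, Equiv.swap_apply_right] at hteq
              -- σ j₀ = α (σ j₀)
              rcases hloop with hl | hl
              · exact hl q h2b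
              · exact hl (σ j₀) hteq.symm
            · rw [Equiv.swap_apply_of_ne_of_ne h2a h2b] at hteq
              -- σ (δ q) = α (σ j₀) = σ (δ j₀)
              have e1 : δ q = δ j₀ := σ.injective (hteq.trans hj₀.symm)
              exact hqj₀ (δ.injective e1)
        · rw [Equiv.swap_apply_of_ne_of_ne h1 h2] at hteq
          by_cases h3 : δ t = j₀
          · exfalso
            rw [h3, Equiv.swap_apply_left] at hteq
            -- σ q = α (σ t), t = δ⁻¹ j₀
            apply hqC
            have e1 : t = δ⁻¹ j₀ := by rw [← h3, Equiv.Perm.inv_apply_self]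
            have e2 : q = σ⁻¹ (α (σ t)) := by rw [← hteq, Equiv.Perm.inv_apply_self]
            rw [e2, e1]
          · by_cases h4 : δ t = q
            · exfalso
              rw [h4, Equiv.swap_apply_right] at hteq
              -- σ j₀ = α (σ t)
              apply hqD
              have e1 : σ t = α⁻¹ (σ j₀) := by rw [hteq, Equiv.Perm.inv_apply_self]
              have e2 : t = σ⁻¹ (α⁻¹ (σ j₀)) := by rw [← e1, Equiv.Perm.inv_apply_self]
              rw [← h4, e2]
            · rw [Equiv.swap_apply_of_ne_of_ne h3 h4] at hteq
              exact ⟨h1, hteq, htne⟩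
    · -- STYLE 1 : swap at positions δ j₀ and q
      have hpj₀ : δ j₀ ≠ j₀ := hδj₀
      have hpj₁ : δ j₀ ≠ j₁ := hcase
      have hpδj₁ : δ j₀ ≠ δ j₁ := fun h => hj₀ne (δ.injective h)
      have hδp : δ (δ j₀) ≠ δ j₀ := fun h => hδj₀ (δ.injective h)
      have hex : ∃ q : Fin n,
          q ∉ [δ j₀, j₀, j₁, δ j₁, σ⁻¹ (α⁻¹ (σ (δ (δ j₀)))),
            δ⁻¹ (σ⁻¹ (α (σ (δ j₀))))].toFinset := by
        by_contra hc
        push_neg at hc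
        have h7 : (Finset.univ : Finset (Fin n)).card ≤
            ([δ j₀, j₀, j₁, δ j₁, σ⁻¹ (α⁻¹ (σ (δ (δ j₀)))),
              δ⁻¹ (σ⁻¹ (α (σ (δ j₀))))].toFinset).card :=
          Finset.card_le_card (fun z _ => hc z)
        have h8 := List.toFinset_card_le
          [δ j₀, j₀, j₁, δ j₁, σ⁻¹ (α⁻¹ (σ (δ (δ j₀)))), δ⁻¹ (σ⁻¹ (α (σ (δ j₀))))]
        simp only [Finset.card_univ, Fintype.card_fin, List.length_cons,
          List.length_nil] at h7 h8
        omega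
      obtain ⟨q, hq⟩ := hex
      simp only [List.mem_toFinset, List.mem_cons, List.not_mem_nil, or_false] at hq
      push_neg at hq
      obtain ⟨hqp, hqj₀, hqj₁, hqδj₁, hqA, hqB⟩ := hq
      set σ' := σ * Equiv.swap (δ j₀) q with hσ'def
      have happ : ∀ z, σ' z = σ (Equiv.swap (δ j₀) q z) := fun z => rfl
      have hσ'S : σ' ∈ S := by
        rw [hmemS]
        constructor
        · rw [happ, Equiv.swap_apply_of_ne_of_ne (Ne.symm hpj₁) (Ne.symm hqj₁)]
          exact hσ1
        · rw [happ, Equiv.swap_apply_of_ne_of_ne (Ne.symm hpδj₁) (Ne.symm hqδj₁)]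
          exact hσ2
      refine finish σ' hσ'S ?_
      intro t htmem
      obtain ⟨hteq, htne⟩ := (hmemF σ' t).mp htmem
      rw [Finset.mem_erase, hmemF]
      simp only [happ] at hteq
      by_cases h1 : t = j₀
      · exfalso
        rw [h1] at hteq
        rw [Equiv.swap_apply_left,
          Equiv.swap_apply_of_ne_of_ne (Ne.symm hpj₀) (Ne.symm hqj₀)] at hteq
        -- hteq : σ q = α (σ j₀) = σ (δ j₀)
        have e1 : σ q = σ (δ j₀) := hteq.trans hj₀.symm
        exact hqp (σ.injective e1)
      · by_cases h2 : t = δ j₀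
        · exfalso
          rw [h2] at hteq
          rw [Equiv.swap_apply_left] at hteq
          -- hteq : σ (swap (δ j₀) q (δ (δ j₀))) = α (σ q)
          by_cases h2a : δ (δ j₀) = q
          · rw [h2a, Equiv.swap_apply_right] at hteq
            -- σ (δ j₀) = α (σ q) ; also σ (δ j₀) = α (σ j₀)
            have e1 : σ q = σ j₀ := α.injective (hteq.symm.trans hj₀)
            exact hqj₀ (σ.injective e1)
          · rw [Equiv.swap_apply_of_ne_of_ne hδp h2a] at hteq
            -- σ (δ (δ j₀)) = α (σ q)
            apply hqA
            have e1 : σ q = α⁻¹ (σ (δ (δ j₀))) := by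
              rw [hteq, Equiv.Perm.inv_apply_self]
            rw [← e1, Equiv.Perm.inv_apply_self]
        · by_cases h3 : t = q
          · exfalso
            rw [h3] at hteq
            rw [Equiv.swap_apply_right] at hteq
            -- hteq : σ (swap (δ j₀) q (δ q)) = α (σ (δ j₀))
            by_cases h3a : δ q = δ j₀
            · exact hqj₀ (δ.injective h3a)
            · by_cases h3b : δ q = q
              · rw [h3b, Equiv.swap_apply_right] at hteq
                -- σ (δ j₀) = α (σ (δ j₀))
                rcases hloop with hl | hl
                · exact hl q h3b
                · exact hl (σ (δ j₀)) hteq.symm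
              · rw [Equiv.swap_apply_of_ne_of_ne h3a h3b] at hteq
                -- σ (δ q) = α (σ (δ j₀))
                apply hqB
                have e1 : δ q = σ⁻¹ (α (σ (δ j₀))) := by
                  rw [← hteq, Equiv.Perm.inv_apply_self]
                rw [← e1, Equiv.Perm.inv_apply_self]
          · rw [Equiv.swap_apply_of_ne_of_ne h2 h3] at hteq
            by_cases h4 : δ t = δ j₀
            · exact absurd (δ.injective h4) h1
            · by_cases h5 : δ t = q
              · exfalso
                rw [h5, Equiv.swap_apply_right] at hteq
                -- σ (δ j₀) = α (σ t) ; also σ (δ j₀) = α (σ j₀)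
                have e1 : σ t = σ j₀ := α.injective (hteq.symm.trans hj₀)
                exact h1 (σ.injective e1)
              · rw [Equiv.swap_apply_of_ne_of_ne h4 h5] at hteq
                exact ⟨h1, hteq, htne⟩

theorem stmt11 (n : ℕ) (hn : 7 ≤ n) (α β : Equiv.Perm (Fin n)) (hα : α ≠ 1) (hβ : β ≠ 1)
    (hcyc : (∃ k ∈ α.cycleType, 3 ≤ k) ∨ (∃ k ∈ β.cycleType, 3 ≤ k))
    (hfpf : (∀ i : Fin n, α i ≠ i) ∨ (∀ i : Fin n, β i ≠ i)) :
    ∃ σ : Equiv.Perm (Fin n),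
      (Finset.univ.filter fun i => (σ⁻¹ * α * σ * β) i = i).card = 1 := by
  classical
  rcases hcyc with h3 | h3
  · -- α has a cycle of length ≥ 3 ; conjugate α, δ = β⁻¹
    obtain ⟨x, hx1, hx2⟩ := extract_three α h3
    obtain ⟨i₀, hi₀⟩ := perm_exists_moved β hβ
    have hj₁ : β⁻¹ i₀ ≠ i₀ := by
      intro h
      have h2 := congrArg β h
      rw [Equiv.Perm.apply_inv_self] at h2
      exact hi₀ h2.symm
    have hloop : (∀ i, β⁻¹ i ≠ i) ∨ (∀ v, α v ≠ v) := by
      rcases hfpf with h | h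
      · exact Or.inr h
      · refine Or.inl fun i hi => h i ?_
        have h2 := congrArg β hi
        rw [Equiv.Perm.apply_inv_self] at h2
        exact h2.symm
    obtain ⟨σ, hP⟩ := core hn α β⁻¹ hloop x hx1 hx2 i₀ hj₁
    refine ⟨σ, ?_⟩
    have hset : (Finset.univ.filter fun i => (σ⁻¹ * α * σ * β) i = i) = {β⁻¹ i₀} := by
      ext i
      simp only [Finset.mem_filter, Finset.mem_univ, true_and, Finset.mem_singleton]
      simp only [Equiv.Perm.mul_apply]
      have hPi : (σ i = α (σ (β i))) ↔ β i = i₀ := by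
        have h2 := hP (β i)
        rwa [Equiv.Perm.inv_apply_self] at h2
      constructor
      · intro h
        have h' : σ i = α (σ (β i)) := by
          have h2 := congrArg σ h
          rw [Equiv.Perm.apply_inv_self] at h2
          exact h2.symm
        have hb : β i = i₀ := hPi.mp h'
        rw [← hb, Equiv.Perm.inv_apply_self]
      · intro h
        have hb : β i = i₀ := by rw [h, Equiv.Perm.apply_inv_self]
        have h' := hPi.mpr hb
        rw [← h', Equiv.Perm.inv_apply_self]
    rw [hset, Finset.card_singleton]
  · -- β has a cycle of length ≥ 3 ; conjugate β, δ = α⁻¹, and set σ = τ⁻¹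
    obtain ⟨x, hx1, hx2⟩ := extract_three β h3
    obtain ⟨i₀, hi₀⟩ := perm_exists_moved α hα
    have hj₁ : α⁻¹ i₀ ≠ i₀ := by
      intro h
      have h2 := congrArg α h
      rw [Equiv.Perm.apply_inv_self] at h2
      exact hi₀ h2.symm
    have hloop : (∀ i, α⁻¹ i ≠ i) ∨ (∀ v, β v ≠ v) := by
      rcases hfpf with h | h
      · refine Or.inl fun i hi => h i ?_
        have h2 := congrArg α hi
        rw [Equiv.Perm.apply_inv_self] at h2
        exact h2.symm
      · exact Or.inr h
    obtain ⟨τ, hP⟩ := core hn β α⁻¹ hloop x hx1 hx2 i₀ hj₁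
    refine ⟨τ⁻¹, ?_⟩
    have hset : (Finset.univ.filter fun i => ((τ⁻¹)⁻¹ * α * τ⁻¹ * β) i = i)
        = {β⁻¹ (τ (α⁻¹ i₀))} := by
      ext i
      simp only [Finset.mem_filter, Finset.mem_univ, true_and, Finset.mem_singleton]
      simp only [Equiv.Perm.mul_apply, inv_inv]
      -- condition : τ (α (τ⁻¹ (β i))) = i
      have hPj : (τ (τ⁻¹ (β i)) = β (τ (α (τ⁻¹ (β i))))) ↔ α (τ⁻¹ (β i)) = i₀ := by
        have h2 := hP (α (τ⁻¹ (β i)))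
        rwa [Equiv.Perm.inv_apply_self] at h2
      rw [Equiv.Perm.apply_inv_self] at hPj
      constructor
      · intro h
        have h1 : β i = β (τ (α (τ⁻¹ (β i)))) := by rw [h]
        have h2 : α (τ⁻¹ (β i)) = i₀ := hPj.mp h1
        have h3 : τ⁻¹ (β i) = α⁻¹ i₀ := by
          rw [← h2, Equiv.Perm.inv_apply_self]
        rw [← h3, Equiv.Perm.apply_inv_self, Equiv.Perm.inv_apply_self]
      · intro h
        have hb : τ⁻¹ (β i) = α⁻¹ i₀ := by
          rw [h, Equiv.Perm.apply_inv_self, Equiv.Perm.inv_apply_self]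
        have h2 : α (τ⁻¹ (β i)) = i₀ := by
          rw [hb, Equiv.Perm.apply_inv_self]
        have h1 := hPj.mpr h2
        exact (β.injective h1).symm
    rw [hset, Finset.card_singleton]
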